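/- Let A be the SARX companion matrix of type (n_y, n_u) with coefficients h^1,...,h^n, n = n_y + n_u, and suppose h^n ≠ 0. Then the row vectors e_{n_y}^T A^j for j = 0,...,n - 1 span R^{1×n}. -/

import Mathlib

/-- The companion-like matrix of a SISO (S)ARX system of type `(ny, nu)` with coefficient
row `h` (0-based indexing: `h i` corresponds to `h^{i+1}` in the paper):
`A e_j = h^j e_1 + e_{j+1}` for `j ∈ {1,...,n-1} \ {n_y}`, `A e_{n_y} = h^{n_y} e_1`,
`A e_n = h^n e_1`, where `n = n_y + n_u`. -/
def sarxCompanion (ny nu : ℕ) (h : Fin (ny + nu) → ℝ) :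
    Matrix (Fin (ny + nu)) (Fin (ny + nu)) ℝ :=
  Matrix.of fun i k =>
    (if (i : ℕ) = 0 then h k else 0) +
    (if (i : ℕ) = (k : ℕ) + 1 ∧ (k : ℕ) + 1 ≠ ny then 1 else 0)

/-- The subspace `X1 = span{e_1, ..., e_{n_y}}`. -/
def sarxX1 (ny nu : ℕ) : Submodule ℝ (Fin (ny + nu) → ℝ) :=
  Submodule.span ℝ {v : Fin (ny + nu) → ℝ | ∃ i : Fin (ny + nu), (i : ℕ) < ny ∧ v = Pi.single i 1}

namespace Stmt8Aux

open Matrix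

variable (ny nu : ℕ) (h : Fin (ny + nu) → ℝ)

/-- extend a vector on `Fin (ny+nu)` by zero to `ℕ`. -/
def zext (v : Fin (ny + nu) → ℝ) : ℕ → ℝ :=
  fun i => if hi : i < ny + nu then v ⟨i, hi⟩ else 0

/-- the `m`-fold shifted coefficient row, ℕ-indexed. -/
def uA (m k : ℕ) : ℝ :=
  if ny ≤ k ∨ k + m < ny then zext ny nu h (k + m) else 0

def uvec (m : ℕ) : Fin (ny + nu) → ℝ := fun k => uA ny nu h m (k : ℕ)

lemma vecMul_sarx (v : Fin (ny + nu) → ℝ) (k : Fin (ny + nu)) :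
    (v ᵥ* sarxCompanion ny nu h) k =
      zext ny nu v 0 * h k +
        (if (k : ℕ) + 1 ≠ ny then zext ny nu v ((k : ℕ) + 1) else 0) := by
  have hk := k.isLt
  simp only [Matrix.vecMul, dotProduct, sarxCompanion, Matrix.of_apply, mul_add,
    Finset.sum_add_distrib]
  congr 1
  · rw [Finset.sum_eq_single (⟨0, by omega⟩ : Fin (ny + nu))]
    · rw [zext, dif_pos (by omega : 0 < ny + nu)]; simp
    · intro b _ hb
      have : (b : ℕ) ≠ 0 := fun e => hb (Fin.ext e)
      simp [this]
    · simp
  · by_cases hky : (k : ℕ) + 1 ≠ ny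
    · by_cases hkn : (k : ℕ) + 1 < ny + nu
      · rw [Finset.sum_eq_single (⟨(k : ℕ) + 1, hkn⟩ : Fin (ny + nu))]
        · rw [if_pos hky, zext, dif_pos hkn]; simp [hky]
        · intro b _ hb
          have : (b : ℕ) ≠ (k : ℕ) + 1 := fun e => hb (Fin.ext e)
          simp [this]
        · simp
      · rw [if_pos hky, zext, dif_neg hkn, Finset.sum_eq_zero]
        intro b _
        have : (b : ℕ) ≠ (k : ℕ) + 1 := by omega
        simp [this]
    · rw [if_neg hky, Finset.sum_eq_zero]
      intro b _
      simp [hky]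

lemma uvec_zero : uvec ny nu h 0 = h := by
  funext k
  have hk := k.isLt
  show uA ny nu h 0 (k : ℕ) = h k
  rw [uA, if_pos (by omega), zext, dif_pos (by omega : (k:ℕ) + 0 < ny + nu)]
  congr 1

lemma zext_uvec (m i : ℕ) : zext ny nu (uvec ny nu h m) i = uA ny nu h m i := by
  by_cases hi : i < ny + nu
  · rw [zext, dif_pos hi]; rfl
  · rw [zext, dif_neg hi, uA]
    split_ifs with hc
    · rw [zext, dif_neg (by omega)]
    · rfl

lemma urec (m : ℕ) :
    uvec ny nu h (m + 1) =
      (uvec ny nu h m) ᵥ* sarxCompanion ny nu h - uA ny nu h m 0 • h := by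
  funext k
  have hk := k.isLt
  rw [Pi.sub_apply, Pi.smul_apply, vecMul_sarx, zext_uvec, zext_uvec, smul_eq_mul, add_sub_cancel_left]
  by_cases hky : (k : ℕ) + 1 ≠ ny
  · rw [if_pos hky]
    show uA ny nu h (m+1) (k:ℕ) = uA ny nu h m ((k:ℕ)+1)
    rw [uA, uA]
    by_cases hc : ny ≤ (k:ℕ) ∨ (k:ℕ) + (m+1) < ny
    · rw [if_pos hc, if_pos (by omega)]
      congr 1
      omega
    · rw [if_neg hc, if_neg (by omega)]
  · rw [if_neg hky]
    show uA ny nu h (m+1) (k:ℕ) = 0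
    rw [uA, if_neg (by omega)]

lemma sarx_row (i : Fin (ny + nu)) (h1 : 1 ≤ (i : ℕ)) (h2 : (i : ℕ) ≠ ny) :
    sarxCompanion ny nu h i = Pi.single (⟨(i : ℕ) - 1, by omega⟩ : Fin (ny + nu)) 1 := by
  funext k
  simp only [sarxCompanion, Matrix.of_apply, Pi.single_apply]
  rw [if_neg (by omega)]
  by_cases hc : (i : ℕ) = (k : ℕ) + 1
  · rw [if_pos ⟨hc, by omega⟩, if_pos (Fin.ext (by simp; omega)), zero_add]
  · rw [if_neg (fun e => hc e.1), if_neg (fun e => by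
      have := congrArg Fin.val e; simp at this; omega), zero_add]

lemma sarx_row0 (h0 : 0 < ny + nu) :
    sarxCompanion ny nu h ⟨0, h0⟩ = h := by
  funext k
  simp [sarxCompanion]

lemma umem (m : ℕ) :
    uvec ny nu h m ∈ Submodule.span ℝ
      {v : Fin (ny + nu) → ℝ | ∃ j ≤ m, v = h ᵥ* (sarxCompanion ny nu h) ^ j} := by
  induction m with
  | zero =>
    apply Submodule.subset_span
    exact ⟨0, le_refl 0, by rw [pow_zero, Matrix.vecMul_one, uvec_zero]⟩
  | succ m ih =>
    rw [urec]
    apply Submodule.sub_mem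
    · have h1 := Submodule.mem_map_of_mem (f := (sarxCompanion ny nu h).vecMulLinear) ih
      rw [Submodule.map_span] at h1
      have hsub : (sarxCompanion ny nu h).vecMulLinear ''
          {v : Fin (ny + nu) → ℝ | ∃ j ≤ m, v = h ᵥ* (sarxCompanion ny nu h) ^ j} ⊆
          {v : Fin (ny + nu) → ℝ | ∃ j ≤ m + 1, v = h ᵥ* (sarxCompanion ny nu h) ^ j} := by
        rintro x ⟨v, ⟨j, hj, rfl⟩, rfl⟩
        exact ⟨j + 1, by omega, by
          rw [Matrix.vecMulLinear_apply, Matrix.vecMul_vecMul, ← pow_succ]⟩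
      exact Submodule.span_mono hsub h1
    · exact Submodule.smul_mem _ _ (Submodule.subset_span
        ⟨0, by omega, by rw [pow_zero, Matrix.vecMul_one]⟩)

end Stmt8Aux

/-- If `h^n ≠ 0`, the row vectors `e_{n_y}ᵀ A^j`, `j = 0,...,n-1`, span `ℝ^{1×n}`. -/
theorem stmt8 (ny nu : ℕ) (hny : 1 ≤ ny) (hnu : 1 ≤ nu) (h : Fin (ny + nu) → ℝ)
    (hz : h ⟨ny + nu - 1, by omega⟩ ≠ 0) :
    Submodule.span ℝ {v : Fin (ny + nu) → ℝ |
      ∃ j < ny + nu, v = Matrix.vecMul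
        (Pi.single (⟨ny - 1, by omega⟩ : Fin (ny + nu)) 1)
        ((sarxCompanion ny nu h) ^ j)} = ⊤ := by
  open Matrix in
  set A := sarxCompanion ny nu h with hA
  set w : Fin (ny + nu) → ℝ := Pi.single (⟨ny - 1, by omega⟩ : Fin (ny + nu)) 1 with hw
  set S := {v : Fin (ny + nu) → ℝ | ∃ j < ny + nu, v = w ᵥ* A ^ j} with hS
  -- the first ny powers give the standard basis vectors e_{ny-1},...,e_0
  have hrow : ∀ j, j < ny → w ᵥ* A ^ j
      = Pi.single (⟨ny - 1 - j, by omega⟩ : Fin (ny + nu)) 1 := by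
    intro j
    induction j with
    | zero => intro _; rw [pow_zero, Matrix.vecMul_one]; exact hw
    | succ j ih =>
      intro hj
      rw [pow_succ, ← Matrix.vecMul_vecMul, ih (by omega), Matrix.single_one_vecMul, Matrix.row_apply', hA,
        Stmt8Aux.sarx_row ny nu h _ (by simp; omega) (by simp; omega)]
      exact congrArg (fun t : Fin (ny + nu) => (Pi.single t 1 : Fin (ny + nu) → ℝ)) (Fin.ext (by simp only [Fin.val_mk]; omega))
  have e0 : w ᵥ* A ^ (ny - 1) = Pi.single (⟨0, by omega⟩ : Fin (ny + nu)) 1 := by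
    rw [hrow (ny - 1) (by omega)]
    exact congrArg (fun t : Fin (ny + nu) => (Pi.single t 1 : Fin (ny + nu) → ℝ)) (Fin.ext (by simp only [Fin.val_mk]; omega))
  have hA0 : (Pi.single (⟨0, by omega⟩ : Fin (ny + nu)) (1 : ℝ)) ᵥ* A = h := by
    rw [Matrix.single_one_vecMul, Matrix.row_apply', hA, Stmt8Aux.sarx_row0]
  have hpow : ∀ j : ℕ, h ᵥ* A ^ j = w ᵥ* A ^ (ny + j) := by
    intro j
    have hAe : A ^ (ny + j) = A ^ (ny - 1) * A * A ^ j := by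
      rw [← pow_succ, ← pow_add]
      congr 1
      omega
    rw [hAe, ← Matrix.vecMul_vecMul, ← Matrix.vecMul_vecMul, e0, hA0]
  have hu : ∀ m, m < nu → Stmt8Aux.uvec ny nu h m ∈ Submodule.span ℝ S := by
    intro m hm
    refine Submodule.span_le.mpr ?_ (Stmt8Aux.umem ny nu h m)
    rintro v ⟨j, hj, rfl⟩
    exact Submodule.subset_span ⟨ny + j, by omega, by rw [← hA]; exact hpow j⟩
  -- all standard basis vectors lie in the span
  have key : ∀ K : ℕ, ∀ k : Fin (ny + nu), (k : ℕ) < K →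
      Pi.single k (1 : ℝ) ∈ Submodule.span ℝ S := by
    intro K
    induction K with
    | zero => intro k hk; omega
    | succ K ih =>
      intro k hk
      rcases lt_or_ge (k : ℕ) K with h' | h'
      · exact ih k h'
      have hkK : (k : ℕ) = K := by omega
      rcases lt_or_ge (k : ℕ) ny with hky | hky
      · refine Submodule.subset_span ⟨ny - 1 - (k : ℕ), by omega, ?_⟩
        rw [hrow (ny - 1 - (k : ℕ)) (by omega)]
        exact congrArg (fun t : Fin (ny + nu) => (Pi.single t 1 : Fin (ny + nu) → ℝ)) (Fin.ext (by simp only [Fin.val_mk]; omega))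
      · -- upper coordinates
        set m := ny + nu - 1 - (k : ℕ) with hm'
        have hm : m < nu := by omega
        have heq : Pi.single k (1 : ℝ) = (h ⟨ny + nu - 1, by omega⟩)⁻¹ •
            (Stmt8Aux.uvec ny nu h m -
              ∑ j ∈ Finset.univ.filter (fun j : Fin (ny + nu) => (j : ℕ) < (k : ℕ)),
                Stmt8Aux.uvec ny nu h m j • (Pi.single j 1 : Fin (ny + nu) → ℝ)) := by
          funext l
          simp only [Pi.smul_apply, Pi.sub_apply, Finset.sum_apply, smul_eq_mul]
          have hsum : ∑ j ∈ Finset.univ.filter (fun j : Fin (ny + nu) => (j : ℕ) < (k : ℕ)),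
              Stmt8Aux.uvec ny nu h m j * (Pi.single j 1 : Fin (ny + nu) → ℝ) l
              = if (l : ℕ) < (k : ℕ) then Stmt8Aux.uvec ny nu h m l else 0 := by
            rw [Finset.sum_congr rfl
              (fun j _ => by rw [Pi.single_apply, mul_ite, mul_one, mul_zero]),
              Finset.sum_ite_eq]
            simp [Finset.mem_filter]
          rw [hsum, Pi.single_apply]
          rcases lt_trichotomy (l : ℕ) (k : ℕ) with hlt | hleq | hgt
          · rw [if_neg (fun e => by rw [e] at hlt; omega), if_pos hlt, sub_self, mul_zero]
          · have : l = k := Fin.ext hleq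
            subst this
            rw [if_pos rfl, if_neg (by omega), sub_zero]
            have hval : Stmt8Aux.uvec ny nu h m l = h ⟨ny + nu - 1, by omega⟩ := by
              show Stmt8Aux.uA ny nu h m (l : ℕ) = _
              rw [Stmt8Aux.uA, if_pos (Or.inl hky), Stmt8Aux.zext, dif_pos (by omega)]
              have hlval := l.isLt
              exact congrArg h (Fin.ext (by simp only [Fin.val_mk]; omega))
            rw [hval, inv_mul_cancel₀ hz]
          · rw [if_neg (fun e => by rw [e] at hgt; omega), if_neg (by omega)]
            have hval : Stmt8Aux.uvec ny nu h m l = 0 := by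
              show Stmt8Aux.uA ny nu h m (l : ℕ) = 0
              rw [Stmt8Aux.uA, if_pos (Or.inl (by omega)), Stmt8Aux.zext, dif_neg (by omega)]
            rw [hval, sub_zero, mul_zero]
        rw [heq]
        refine Submodule.smul_mem _ _ (Submodule.sub_mem _ (hu m hm) (Submodule.sum_mem _ ?_))
        intro j hj
        rw [Finset.mem_filter] at hj
        exact Submodule.smul_mem _ _ (ih j (by omega))
  refine top_unique ?_
  rw [← (Pi.basisFun ℝ (Fin (ny + nu))).span_eq]
  refine Submodule.span_le.mpr ?_
  rintro _ ⟨i, rfl⟩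
  rw [Pi.basisFun_apply]
  exact key (ny + nu) i i.isLt
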